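/- Let G be a finite group and let f : G → ℝ≥0 be a nonnegative function with ∑_{g∈G} f(g) = 1 (a probability density). Then the Cesàro means f_n = (1/n) ∑_{k=1}^n f^{*k} of the convolution powers of f converge pointwise to a function a : G → ℝ≥0 satisfying a * a = a. -/

import Mathlib

open Filter

/-- Convolution of functions on a finite group. -/
noncomputable def conv {G : Type*} [Group G] [Fintype G] (f h : G → ℝ) : G → ℝ :=
  fun g => ∑ x : G, f x * h (x⁻¹ * g)

/-- The `k`-fold convolution power of `f` (with `convPow f 0` the identity for convolution,
so that `convPow f k = f^{*k}` for `k ≥ 1`). -/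
noncomputable def convPow {G : Type*} [Group G] [Fintype G] [DecidableEq G]
    (f : G → ℝ) : ℕ → G → ℝ
  | 0 => fun g => if g = 1 then 1 else 0
  | n + 1 => conv (convPow f n) f

section Helpers
set_option linter.unusedSectionVars false

variable {G : Type*} [Group G] [Fintype G] [DecidableEq G]

lemma conv_assoc (u v w : G → ℝ) : conv (conv u v) w = conv u (conv v w) := by
  funext g
  simp only [conv, Finset.sum_mul, Finset.mul_sum]
  rw [Finset.sum_comm]
  refine Finset.sum_congr rfl fun y _ => ?_
  rw [← Equiv.sum_comp (Equiv.mulLeft y) (fun x => u y * v (y⁻¹ * x) * w (x⁻¹ * g))]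
  refine Finset.sum_congr rfl fun z _ => ?_
  simp [mul_assoc, mul_inv_rev]

lemma conv_delta (f v : G → ℝ) : conv v (convPow f 0) = v := by
  funext g
  simp only [conv, convPow]
  rw [Finset.sum_eq_single g]
  · simp
  · intro b _ hb
    rw [if_neg, mul_zero]
    intro h
    exact hb (eq_of_inv_mul_eq_one h)
  · simp

lemma delta_conv (f v : G → ℝ) : conv (convPow f 0) v = v := by
  funext g
  simp only [conv, convPow]
  rw [Finset.sum_eq_single 1] <;> simp +contextual

lemma sum_conv (u v : G → ℝ) : ∑ g : G, conv u v g = (∑ g : G, u g) * (∑ g : G, v g) := by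
  simp only [conv]
  rw [Finset.sum_comm, Finset.sum_mul]
  refine Finset.sum_congr rfl fun x _ => ?_
  rw [Finset.mul_sum]
  exact Fintype.sum_equiv (Equiv.mulLeft x⁻¹) (fun g => u x * v (x⁻¹ * g)) (fun g => u x * v g) (fun g => rfl)

noncomputable def convT (f : G → ℝ) : (G → ℝ) →ₗ[ℝ] (G → ℝ) where
  toFun v := conv v f
  map_add' u v := by
    funext g; simp [conv, add_mul, Finset.sum_add_distrib]
  map_smul' c v := by
    funext g; simp [conv, Finset.mul_sum, mul_assoc]

variable (f : G → ℝ)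

lemma convPow_nonneg (hf : ∀ g, 0 ≤ f g) (k : ℕ) (g : G) : 0 ≤ convPow f k g := by
  induction k generalizing g with
  | zero => simp only [convPow]; positivity
  | succ n ih =>
    simp only [convPow, conv]
    exact Finset.sum_nonneg fun x _ => mul_nonneg (ih x) (hf _)

lemma sum_convPow (hsum : ∑ g : G, f g = 1) (k : ℕ) : ∑ g : G, convPow f k g = 1 := by
  induction k with
  | zero => simp [convPow]
  | succ n ih => simp only [convPow]; rw [sum_conv, ih, hsum, one_mul]

lemma convPow_le_one (hf : ∀ g, 0 ≤ f g) (hsum : ∑ g : G, f g = 1) (k : ℕ) (g : G) :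
    convPow f k g ≤ 1 := by
  rw [← sum_convPow f hsum k]
  exact Finset.single_le_sum (fun x _ => convPow_nonneg f hf k x) (Finset.mem_univ g)

lemma convT_pow_apply (v : G → ℝ) (n : ℕ) : ((convT f) ^ n) v = conv v (convPow f n) := by
  induction n with
  | zero => exact (conv_delta f v).symm
  | succ n ih =>
    rw [pow_succ', Module.End.mul_apply, ih]
    show conv (conv v (convPow f n)) f = _
    rw [conv_assoc]
    rfl

lemma convT_pow_f (n : ℕ) : ((convT f) ^ n) f = convPow f (n + 1) := by
  induction n with
  | zero =>
    rw [pow_zero]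
    show f = conv (convPow f 0) f
    exact (delta_conv f f).symm
  | succ n ih =>
    rw [pow_succ', Module.End.mul_apply, ih]
    show conv (convPow f (n+1)) f = _
    rfl

lemma convT_pow_bound (hf : ∀ g, 0 ≤ f g) (hsum : ∑ g : G, f g = 1) (v : G → ℝ) (n : ℕ) (g : G) :
    |((convT f) ^ n) v g| ≤ ∑ x : G, |v x| := by
  rw [convT_pow_apply]
  calc |∑ x : G, v x * convPow f n (x⁻¹ * g)| ≤ ∑ x : G, |v x * convPow f n (x⁻¹ * g)| :=
        Finset.abs_sum_le_sum_abs _ _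
    _ ≤ ∑ x : G, |v x| := by
        refine Finset.sum_le_sum fun x _ => ?_
        rw [abs_mul]
        calc |v x| * |convPow f n (x⁻¹ * g)| ≤ |v x| * 1 := by
              refine mul_le_mul_of_nonneg_left ?_ (abs_nonneg _)
              rw [abs_of_nonneg (convPow_nonneg f hf n _)]
              exact convPow_le_one f hf hsum n _
          _ = |v x| := mul_one _

lemma convPow_one : convPow f 1 = f := by
  show conv (convPow f 0) f = f
  exact delta_conv f f

theorem cesaro_convolution_powers_converge'
    (hf : ∀ g, 0 ≤ f g) (hsum : ∑ g : G, f g = 1) :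
    ∃ a : G → ℝ, (∀ g, 0 ≤ a g) ∧ conv a a = a ∧
      ∀ g : G, Tendsto (fun n : ℕ => (n : ℝ)⁻¹ * ∑ k ∈ Finset.Icc 1 n, convPow f k g)
        atTop (nhds (a g)) := by
  classical
  set S : (G → ℝ) →ₗ[ℝ] (G → ℝ) := convT f with hS
  set L : (G → ℝ) →ₗ[ℝ] (G → ℝ) := S - LinearMap.id with hL
  -- telescoping sum
  have htel : ∀ (w : G → ℝ) (n : ℕ),
      ∑ k ∈ Finset.range n, (S ^ k) (L w) = (S ^ n) w - w := by
    intro w n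
    have : ∀ k, (S ^ k) (L w) = (S ^ (k+1)) w - (S ^ k) w := by
      intro k
      rw [hL, LinearMap.sub_apply, LinearMap.id_apply, map_sub, ← Module.End.mul_apply, ← pow_succ]
    simp only [this]
    rw [Finset.sum_range_sub (fun k => (S ^ k) w)]
    simp
  -- invariant vectors stay invariant under powers
  have hpow_fix : ∀ (u : G → ℝ), S u = u → ∀ k, (S ^ k) u = u := by
    intro u hu k
    induction k with
    | zero => simp
    | succ k ih => rw [pow_succ, Module.End.mul_apply, hu, ih]
  -- ker ⊓ range = ⊥
  have hdisj : LinearMap.ker L ⊓ LinearMap.range L = ⊥ := by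
    rw [eq_bot_iff]
    rintro x ⟨hxk, w, rfl⟩
    have hSx : S (L w) = L w := by
      have : L (L w) = 0 := hxk
      rw [hL, LinearMap.sub_apply, LinearMap.id_apply, sub_eq_zero] at this
      exact this
    have hfix := hpow_fix (L w) hSx
    have hnx : ∀ n : ℕ, (n : ℝ) • (L w) = (S ^ n) w - w := by
      intro n
      rw [← htel w n]
      simp only [hfix]
      rw [Finset.sum_const, Finset.card_range, ← Nat.cast_smul_eq_nsmul ℝ]
    simp only [Submodule.mem_bot]
    funext g
    show L w g = 0
    by_contra hne
    have hpos : 0 < |L w g| := abs_pos.mpr hne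
    set D := (∑ t : G, |w t|) + |w g| with hD
    have hbound : ∀ n : ℕ, (n : ℝ) * |L w g| ≤ D := by
      intro n
      have h1 : (n : ℝ) * L w g = (S ^ n) w g - w g := by
        have := congrFun (hnx n) g
        simpa using this
      calc (n : ℝ) * |L w g| = |(n : ℝ) * L w g| := by
            rw [abs_mul, Nat.abs_cast]
        _ = |(S ^ n) w g - w g| := by rw [h1]
        _ ≤ |(S ^ n) w g| + |w g| := abs_sub _ _
        _ ≤ D := add_le_add (convT_pow_bound f hf hsum w n g) le_rfl
    obtain ⟨n, hn⟩ := exists_nat_gt (D / |L w g|)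
    have h2 := hbound n
    rw [div_lt_iff₀ hpos] at hn
    linarith
  -- ker ⊔ range = ⊤
  have hsup : LinearMap.ker L ⊔ LinearMap.range L = ⊤ := by
    apply Submodule.eq_top_of_finrank_eq
    have h1 := Submodule.finrank_sup_add_finrank_inf_eq (LinearMap.ker L) (LinearMap.range L)
    rw [hdisj, finrank_bot, add_zero] at h1
    have h2 := LinearMap.finrank_range_add_finrank_ker L
    omega
  -- decompose f
  have hfmem : f ∈ LinearMap.ker L ⊔ LinearMap.range L := by rw [hsup]; trivial
  obtain ⟨u, hu, x, hxmem, huxf⟩ := Submodule.mem_sup.mp hfmem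
  obtain ⟨w, rfl⟩ := hxmem
  have hSu : S u = u := by
    have : L u = 0 := hu
    rw [hL, LinearMap.sub_apply, LinearMap.id_apply, sub_eq_zero] at this
    exact this
  -- sum formula
  have hsum_eq : ∀ (g : G) (n : ℕ), ∑ k ∈ Finset.Icc 1 n, convPow f k g
      = n * u g + ((S ^ n) w g - w g) := by
    intro g n
    have h1 : ∑ k ∈ Finset.Icc 1 n, convPow f k g
        = ∑ k ∈ Finset.range n, ((S ^ k) f) g := by
      rw [← Finset.Ico_add_one_right_eq_Icc, Finset.sum_Ico_eq_sum_range]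
      simp only [Nat.add_sub_cancel]
      refine Finset.sum_congr rfl fun k _ => ?_
      rw [convT_pow_f, add_comm]
    rw [h1]
    have h2 : ∀ k, ((S ^ k) f) g = u g + ((S ^ (k+1)) w g - (S ^ k) w g) := by
      intro k
      have : (S ^ k) f = (S ^ k) u + (S ^ k) (L w) := by
        rw [← map_add, huxf]
      rw [this, hpow_fix u hSu k]
      have : (S ^ k) (L w) = (S ^ (k+1)) w - (S ^ k) w := by
        rw [hL, LinearMap.sub_apply, LinearMap.id_apply, map_sub, ← Module.End.mul_apply, ← pow_succ]
      rw [this]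
      simp
    simp only [h2]
    rw [Finset.sum_add_distrib, Finset.sum_const, Finset.card_range]
    congr 1
    · simp [nsmul_eq_mul]
    · have := Finset.sum_range_sub (fun k => (S ^ k) w g) n
      simpa using this
  -- the main convergence
  have hmain : ∀ g : G, Tendsto (fun n : ℕ => (n : ℝ)⁻¹ * ∑ k ∈ Finset.Icc 1 n, convPow f k g)
      atTop (nhds (u g)) := by
    intro g
    have hten : Tendsto (fun n : ℕ => u g + (n : ℝ)⁻¹ * ((S ^ n) w g - w g)) atTop
        (nhds (u g)) := by
      have h0 : Tendsto (fun n : ℕ => (n : ℝ)⁻¹ * ((S ^ n) w g - w g)) atTop (nhds 0) := by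
        apply squeeze_zero_norm (a := fun n : ℕ => ((∑ t : G, |w t|) + |w g|) * (n : ℝ)⁻¹)
        · intro n
          rw [Real.norm_eq_abs, abs_mul, abs_inv, Nat.abs_cast, mul_comm]
          refine mul_le_mul_of_nonneg_right ?_ (by positivity)
          calc |(S ^ n) w g - w g| ≤ |(S ^ n) w g| + |w g| := abs_sub _ _
            _ ≤ _ := add_le_add (convT_pow_bound f hf hsum w n g) le_rfl
        · simpa using (tendsto_inv_atTop_nhds_zero_nat).const_mul
            ((∑ t : G, |w t|) + |w g|)
      simpa using tendsto_const_nhds.add h0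
    refine hten.congr' ?_
    filter_upwards [eventually_ge_atTop 1] with n hn
    have hn0 : (n : ℝ) ≠ 0 := Nat.cast_ne_zero.mpr (by omega)
    rw [hsum_eq g n]
    field_simp
  refine ⟨u, ?_, ?_, hmain⟩
  · intro g
    refine ge_of_tendsto' (hmain g) fun n => ?_
    exact mul_nonneg (by positivity)
      (Finset.sum_nonneg fun k _ => convPow_nonneg f hf k g)
  · -- idempotence
    have hconvuf : conv u f = u := hSu
    have hconvPow : ∀ k : ℕ, conv u (convPow f (k+1)) = u := by
      intro k
      induction k with
      | zero => rw [convPow_one, hconvuf]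
      | succ k ih =>
        show conv u (conv (convPow f (k+1)) f) = u
        rw [← conv_assoc, ih, hconvuf]
    funext g
    have hseq : Tendsto (fun n : ℕ => ∑ x : G,
        u x * ((n : ℝ)⁻¹ * ∑ k ∈ Finset.Icc 1 n, convPow f k (x⁻¹ * g))) atTop
        (nhds (conv u u g)) := by
      apply tendsto_finset_sum
      intro x _
      exact (hmain (x⁻¹ * g)).const_mul (u x)
    have hconst : Tendsto (fun _ : ℕ => u g) atTop (nhds (u g)) := tendsto_const_nhds
    have heq : (fun n : ℕ => ∑ x : G,
        u x * ((n : ℝ)⁻¹ * ∑ k ∈ Finset.Icc 1 n, convPow f k (x⁻¹ * g)))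
        =ᶠ[atTop] fun _ : ℕ => u g := by
      filter_upwards [eventually_ge_atTop 1] with n hn
      have hn0 : (n : ℝ) ≠ 0 := Nat.cast_ne_zero.mpr (by omega)
      have h1 : ∑ x : G, u x * ((n : ℝ)⁻¹ * ∑ k ∈ Finset.Icc 1 n, convPow f k (x⁻¹ * g))
          = (n : ℝ)⁻¹ * ∑ k ∈ Finset.Icc 1 n, (conv u (convPow f k)) g := by
        calc ∑ x : G, u x * ((n : ℝ)⁻¹ * ∑ k ∈ Finset.Icc 1 n, convPow f k (x⁻¹ * g))
            = ∑ x : G, ∑ k ∈ Finset.Icc 1 n, (n : ℝ)⁻¹ * (u x * convPow f k (x⁻¹ * g)) := by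
              refine Finset.sum_congr rfl fun x _ => ?_
              rw [Finset.mul_sum, Finset.mul_sum]
              exact Finset.sum_congr rfl fun k _ => by ring
          _ = ∑ k ∈ Finset.Icc 1 n, ∑ x : G, (n : ℝ)⁻¹ * (u x * convPow f k (x⁻¹ * g)) :=
              Finset.sum_comm
          _ = (n : ℝ)⁻¹ * ∑ k ∈ Finset.Icc 1 n, (conv u (convPow f k)) g := by
              rw [Finset.mul_sum]
              exact Finset.sum_congr rfl fun k _ => by rw [← Finset.mul_sum]; rfl
      rw [h1]
      have h2 : ∀ k ∈ Finset.Icc 1 n, (conv u (convPow f k)) g = u g := by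
        intro k hk
        obtain ⟨j, rfl⟩ : ∃ j, k = j + 1 := by
          refine ⟨k - 1, ?_⟩
          have := (Finset.mem_Icc.mp hk).1
          omega
        rw [hconvPow j]
      rw [Finset.sum_congr rfl h2, Finset.sum_const, Nat.card_Icc, Nat.add_sub_cancel,
        nsmul_eq_mul, ← mul_assoc, inv_mul_cancel₀ hn0, one_mul]
    exact tendsto_nhds_unique (hseq.congr' heq) hconst

end Helpers

theorem cesaro_convolution_powers_converge {G : Type*} [Group G] [Fintype G] [DecidableEq G]
    (f : G → ℝ) (hf : ∀ g, 0 ≤ f g) (hsum : ∑ g : G, f g = 1) :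
    ∃ a : G → ℝ, (∀ g, 0 ≤ a g) ∧ conv a a = a ∧
      ∀ g : G, Tendsto (fun n : ℕ => (n : ℝ)⁻¹ * ∑ k ∈ Finset.Icc 1 n, convPow f k g)
        atTop (nhds (a g)) := by
  exact cesaro_convolution_powers_converge' f hf hsum
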